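/- arXiv:2301.06495 — 4 statements merged into one kernel-verified Lean document; each statement's English description precedes it below -/
import Mathlib

section
/- Let (a_n)_{n≥1} be a sequence of positive integers and let α be a real number with α > 2 such that a_{n+1} > a_n^{α+1} for all n ≥ 1. Let θ = ∑_{n=1}^∞ 1/a_n, and for m ≥ 1 write ∑_{k=1}^m 1/a_k = p_m/q_m in lowest terms. Then with b_m = (a_1·a_2·…·a_m)^α / a_{m+1}, one has q_m^α · |θ − p_m/q_m| < b_m·(1 + θ) for all m ≥ 1. -/
lemma den_one_div_dvd (a : ℕ) : ((1:ℚ)/(a:ℚ)).den ∣ a := by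
  have h : (((1:ℚ)/(a:ℚ)).den : ℤ) ∣ (a:ℤ) := by
    have h1 : ((1:ℤ):ℚ)/((a:ℤ):ℚ) = (1:ℚ)/(a:ℚ) := by push_cast; ring
    rw [← h1, ← Rat.divInt_eq_div]
    exact Rat.den_dvd 1 a
  exact Int.ofNat_dvd.mp h

lemma den_sum_dvd (a : ℕ → ℕ) (s : Finset ℕ) :
    (∑ k ∈ s, (1:ℚ)/(a k)).den ∣ ∏ k ∈ s, a k := by
  induction s using Finset.cons_induction with
  | empty => simp
  | cons k s hk ih =>
    rw [Finset.sum_cons, Finset.prod_cons]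
    exact dvd_trans (Rat.add_den_dvd _ _) (Nat.mul_dvd_mul (den_one_div_dvd (a k)) ih)

/-- With `(a_n)`, `α` as before, `θ = ∑_{n=1}^∞ 1/a_n`, `p_m/q_m` the `m`-th partial sum
in lowest terms and `b_m = (a_1 ⋯ a_m)^α / a_{m+1}`, one has
`q_m^α * |θ - p_m/q_m| < b_m * (1 + θ)` for all `m ≥ 1`. -/
theorem stmt_4 (a : ℕ → ℕ) (ha : ∀ n, 1 ≤ n → 0 < a n) (α : ℝ) (hα : 2 < α)
    (hgrow : ∀ n, 1 ≤ n → (a n : ℝ) ^ (α + 1) < (a (n + 1) : ℝ))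
    (θ : ℝ) (hθ : HasSum (fun n : ℕ => (1 : ℝ) / (a (n + 1) : ℝ)) θ) :
    ∀ m, 1 ≤ m →
      ((((∑ k ∈ Finset.Icc 1 m, (1 : ℚ) / (a k : ℚ)).den : ℝ)) ^ α) *
          |θ - ((∑ k ∈ Finset.Icc 1 m, (1 : ℚ) / (a k : ℚ) : ℚ) : ℝ)| <
        ((∏ k ∈ Finset.Icc 1 m, (a k : ℝ)) ^ α / (a (m + 1) : ℝ)) * (1 + θ) := by
  intro m hm
  set f : ℕ → ℝ := fun n => (1 : ℝ) / (a (n + 1) : ℝ) with hf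
  have haR : ∀ n, 1 ≤ n → (1:ℝ) ≤ (a n : ℝ) := fun n hn => by
    exact_mod_cast ha n hn
  have haRpos : ∀ n, 1 ≤ n → (0:ℝ) < (a n : ℝ) := fun n hn =>
    lt_of_lt_of_le one_pos (haR n hn)
  -- monotonicity
  have hstep : ∀ n, 1 ≤ n → (a n : ℝ) < (a (n+1) : ℝ) := by
    intro n hn
    calc (a n : ℝ) = (a n : ℝ) ^ (1:ℝ) := (Real.rpow_one _).symm
    _ ≤ (a n : ℝ) ^ (α + 1) := Real.rpow_le_rpow_of_exponent_le (haR n hn) (by linarith)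
    _ < (a (n+1) : ℝ) := hgrow n hn
  have hmono : ∀ i j, 1 ≤ i → i ≤ j → (a i : ℝ) ≤ (a j : ℝ) := by
    intro i j hi hij
    induction j with
    | zero => omega
    | succ j ih =>
      rcases Nat.lt_or_ge i (j+1) with h | h
      · have hj : 1 ≤ j := by omega
        exact le_of_lt (lt_of_le_of_lt (ih (by omega)) (hstep j hj))
      · have : i = j + 1 := by omega
        rw [this]
  have ha2 : (2:ℝ) ≤ (a 2 : ℝ) := by
    have h1 : (1:ℝ) ≤ (a 1 : ℝ) ^ (α + 1) := Real.one_le_rpow (haR 1 le_rfl) (by linarith)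
    have h2 : (1:ℝ) < (a 2 : ℝ) := lt_of_le_of_lt h1 (hgrow 1 le_rfl)
    have : 1 < a 2 := by exact_mod_cast h2
    exact_mod_cast this
  -- key growth bound
  have hkey : ∀ n : ℕ, 2 * (a (n+1) : ℝ) * (a (m+1) : ℝ) ≤ (a (n+m+2) : ℝ) := by
    intro n
    have h1 : (a (n+m+1) : ℝ) ^ ((3:ℕ):ℝ) ≤ (a (n+m+1) : ℝ) ^ (α + 1) :=
      Real.rpow_le_rpow_of_exponent_le (haR _ (by omega)) (by push_cast; linarith)
    have h2 : (a (n+m+1) : ℝ) ^ (α + 1) < (a (n+m+2) : ℝ) := by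
      have := hgrow (n+m+1) (by omega)
      convert this using 3 <;> omega
    rw [Real.rpow_natCast] at h1
    have hA : (2:ℝ) ≤ (a (n+m+1) : ℝ) := le_trans ha2 (hmono 2 (n+m+1) (by omega) (by omega))
    have hB : (a (n+1) : ℝ) ≤ (a (n+m+1) : ℝ) := hmono _ _ (by omega) (by omega)
    have hC : (a (m+1) : ℝ) ≤ (a (n+m+1) : ℝ) := hmono _ _ (by omega) (by omega)
    have hn1 : (0:ℝ) < (a (n+1) : ℝ) := haRpos _ (by omega)
    have hm1 : (0:ℝ) < (a (m+1) : ℝ) := haRpos _ (by omega)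
    have hcube : 2 * (a (n+1) : ℝ) * (a (m+1) : ℝ) ≤ (a (n+m+1) : ℝ) ^ 3 := by
      have : (a (n+m+1) : ℝ) ^ 3 = (a (n+m+1):ℝ) * (a (n+m+1):ℝ) * (a (n+m+1):ℝ) := by ring
      rw [this]
      have hApos : (0:ℝ) ≤ (a (n+m+1) : ℝ) := by linarith
      exact mul_le_mul (mul_le_mul hA hB hn1.le hApos) hC hm1.le
        (mul_nonneg hApos hApos)
    linarith
  -- casts for partial sum
  have hS : ((∑ k ∈ Finset.Icc 1 m, (1 : ℚ) / (a k : ℚ) : ℚ) : ℝ)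
      = ∑ i ∈ Finset.range m, f i := by
    push_cast
    have key : ∀ M : ℕ, ∑ k ∈ Finset.Icc 1 M, (1:ℝ) / (a k : ℝ)
        = ∑ i ∈ Finset.range M, f i := by
      intro M
      induction M with
      | zero => simp
      | succ M ih =>
        rw [Finset.sum_range_succ, ← ih, ← Finset.insert_Icc_right_eq_Icc_add_one (by omega),
          Finset.sum_insert (by simp)]
        simp only [hf]
        ring
    exact key m
  set S : ℝ := ∑ i ∈ Finset.range m, f i with hSdef
  -- tail
  have htail : HasSum (fun n => f (n + m)) (θ - S) := by
    rw [hSdef]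
    exact (hasSum_nat_add_iff' m).mpr hθ
  have htail' : HasSum (fun n => f (n + 1 + m)) (θ - S - f m) := by
    have := (hasSum_nat_add_iff' (f := fun n => f (n + m)) 1).mpr htail
    simpa using this
  have hfpos : ∀ n, 0 < f n := fun n => by
    simp only [hf]
    exact div_pos one_pos (haRpos _ (by omega))
  have hT0 : 0 ≤ θ - S := hasSum_le (fun n => le_of_lt (hfpos _)) hasSum_zero htail
  have hθpos : 0 < θ := by
    have h1 : HasSum (fun n => f (n + 1)) (θ - f 0) := by
      have := (hasSum_nat_add_iff' (f := f) 1).mpr hθ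
      simpa using this
    have h2 : 0 ≤ θ - f 0 := hasSum_le (fun n => le_of_lt (hfpos _)) hasSum_zero h1
    linarith [hfpos 0]
  have hm1 : (0:ℝ) < (a (m+1) : ℝ) := haRpos _ (by omega)
  -- bound on the remote tail
  have hbound : θ - S - f m ≤ (1 / (2 * (a (m+1):ℝ))) * θ := by
    refine hasSum_le ?_ htail' (hθ.mul_left _)
    intro n
    simp only [hf]
    rw [div_mul_div_comm, one_mul]
    have hn1 : (0:ℝ) < (a (n+1) : ℝ) := haRpos _ (by omega)
    refine one_div_le_one_div_of_le (by nlinarith) ?_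
    have := hkey n
    have h3 : n + 1 + m + 1 = n + m + 2 := by omega
    rw [h3]
    linarith
  have hfm : f m = 1 / (a (m+1) : ℝ) := rfl
  have hTlt : θ - S < (1 + θ) / (a (m+1) : ℝ) := by
    rw [hfm] at hbound
    have : (1 / (2 * (a (m+1):ℝ))) * θ < θ / (a (m+1):ℝ) := by
      rw [div_mul_eq_mul_div, one_mul]
      exact div_lt_div_of_pos_left hθpos hm1 (by linarith)
    have hsplit : (1 + θ) / (a (m+1) : ℝ) = 1 / (a (m+1):ℝ) + θ / (a (m+1):ℝ) := by ring
    linarith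
  -- denominator bound
  set q : ℕ := (∑ k ∈ Finset.Icc 1 m, (1 : ℚ) / (a k : ℚ)).den with hq
  set Q : ℕ := ∏ k ∈ Finset.Icc 1 m, a k with hQ
  have hqQ : q ≤ Q := Nat.le_of_dvd (Finset.prod_pos fun k hk => ha k (Finset.mem_Icc.mp hk).1)
    (den_sum_dvd a _)
  have hq1 : 1 ≤ q := (∑ k ∈ Finset.Icc 1 m, (1 : ℚ) / (a k : ℚ)).den_pos
  have hqα : ((q:ℝ)) ^ α ≤ ((Q:ℝ)) ^ α :=
    Real.rpow_le_rpow (by positivity) (by exact_mod_cast hqQ) (by linarith)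
  have hQcast : ((Q:ℝ)) = ∏ k ∈ Finset.Icc 1 m, (a k : ℝ) := by
    rw [hQ]; push_cast; ring
  have hQpos : (0:ℝ) < (Q:ℝ) ^ α := by
    have : (0:ℝ) < (Q:ℝ) := by
      have : 0 < Q := Finset.prod_pos fun k hk => ha k (Finset.mem_Icc.mp hk).1
      exact_mod_cast this
    positivity
  rw [hS, abs_of_nonneg hT0, ← hQcast]
  calc (q:ℝ) ^ α * (θ - S) ≤ (Q:ℝ) ^ α * (θ - S) :=
        mul_le_mul_of_nonneg_right hqα hT0
    _ < (Q:ℝ) ^ α * ((1 + θ) / (a (m+1) : ℝ)) := by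
        exact mul_lt_mul_of_pos_left hTlt hQpos
    _ = (Q:ℝ) ^ α / (a (m+1) : ℝ) * (1 + θ) := by ring
end

section
/- Let (a_n)_{n≥1} be a sequence of positive integers and let α be a real number with α > 2 such that a_{n+1} > a_n^{α+1} for all n ≥ 1. Let θ = ∑_{n=1}^∞ 1/a_n, and for m ≥ 1 write ∑_{k=1}^m 1/a_k = p_m/q_m in lowest terms. Then for all sufficiently large m, |θ − p_m/q_m| < 1/q_m^α. -/
lemma aux_sq_pow : ∀ m : ℕ, (m + 7)^2 ≤ 2^(m + 6) := by
  intro m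
  induction m with
  | zero => norm_num
  | succ n ih =>
    have : (n + 1 + 7)^2 ≤ 2 * (n + 7)^2 := by nlinarith [sq_nonneg n, Nat.zero_le n]
    calc (n + 1 + 7)^2 ≤ 2 * (n + 7)^2 := this
      _ ≤ 2 * 2^(n+6) := by omega
      _ = 2^(n+1+6) := by ring

lemma aux_nat_ineq (B m : ℕ) (h7 : 7 ≤ m) (hB : B + 2 ≤ m) :
    B * m + 2 ≤ 2 * 3^(m-1) := by
  obtain ⟨k, rfl⟩ := Nat.exists_eq_add_of_le h7
  have h1 : (k + 7)^2 ≤ 2^(k+6) := aux_sq_pow k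
  have h2 : (2:ℕ)^(k+6) ≤ 3^(k+6) := Nat.pow_le_pow_left (by norm_num) _
  have h3 : B * (7 + k) + 2 ≤ (k+7)^2 := by nlinarith
  have : 7 + k - 1 = k + 6 := by omega
  rw [this]
  omega

section aux
variable (a : ℕ → ℕ) (α : ℝ) (ha : ∀ n, 1 ≤ n → 0 < a n) (hα : 2 < α)
    (hgrow : ∀ n, 1 ≤ n → (a n : ℝ) ^ (α + 1) < (a (n + 1) : ℝ))

include ha hα hgrow in
lemma aux_cube (n : ℕ) (hn : 1 ≤ n) : a n ^ 3 + 1 ≤ a (n + 1) := by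
  have h1 : (1:ℝ) ≤ (a n : ℝ) := by exact_mod_cast ha n hn
  have h2 : ((a n : ℝ)) ^ (3:ℕ) ≤ (a n : ℝ) ^ (α + 1) := by
    rw [← Real.rpow_natCast (a n : ℝ) 3]
    exact Real.rpow_le_rpow_of_exponent_le h1 (by push_cast; linarith)
  have h3 : ((a n ^ 3 : ℕ) : ℝ) < ((a (n+1) : ℕ) : ℝ) := by
    push_cast; exact lt_of_le_of_lt h2 (hgrow n hn)
  exact_mod_cast h3

include ha hα hgrow in
lemma aux_root (n : ℕ) (hn : 1 ≤ n) : (a n : ℝ) ≤ (a (n+1) : ℝ) ^ (α+1)⁻¹ := by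
  have hpos : (0:ℝ) < (a n : ℝ) := by exact_mod_cast ha n hn
  have hne : α + 1 ≠ 0 := by linarith
  have h1 : ((a n : ℝ) ^ (α+1)) ^ (α+1)⁻¹ ≤ (a (n+1) : ℝ) ^ (α+1)⁻¹ :=
    Real.rpow_le_rpow (Real.rpow_nonneg hpos.le _) (hgrow n hn).le (by positivity)
  rwa [← Real.rpow_mul hpos.le, mul_inv_cancel₀ hne, Real.rpow_one] at h1

include ha hα hgrow in
lemma aux_prod : ∀ m, 1 ≤ m →
    (∏ k ∈ Finset.Icc 1 m, (a k : ℝ)) ≤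
      (a (m+1) : ℝ) ^ ((1 - ((α+1)⁻¹)^m)/α) := by
  intro m
  induction m with
  | zero => omega
  | succ n ih =>
    intro _
    have hne : α + 1 ≠ 0 := by linarith
    have hane : α ≠ 0 := by linarith
    rcases Nat.lt_or_ge n 1 with h | h
    · have hn0 : n = 0 := by omega
      subst hn0
      have : ((1 : ℝ) - ((α+1)⁻¹)^1)/α = (α+1)⁻¹ := by
        field_simp
        ring
      rw [this]
      simpa using aux_root a α ha hα hgrow 1 le_rfl
    · have ih2 := ih h
      have hApos : (0:ℝ) < (a (n+1) : ℝ) := by exact_mod_cast ha (n+1) (by omega)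
      have hs : 0 ≤ (1 - ((α+1)⁻¹)^n)/α := by
        have ht1 : ((α+1)⁻¹ : ℝ) ≤ 1 := by
          rw [inv_le_one_iff₀]; right; linarith
        have h2 := pow_le_one₀ (by positivity : (0:ℝ) ≤ (α+1)⁻¹) ht1 (n := n)
        have hα0 : (0:ℝ) < α := by linarith
        apply div_nonneg (by linarith) hα0.le
      rw [Finset.prod_Icc_succ_top (by omega : 1 ≤ n + 1)]
      calc (∏ k ∈ Finset.Icc 1 n, (a k : ℝ)) * (a (n+1) : ℝ)
          ≤ (a (n+1) : ℝ) ^ ((1 - ((α+1)⁻¹)^n)/α) * (a (n+1) : ℝ) ^ (1:ℝ) := by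
            rw [Real.rpow_one]
            exact mul_le_mul_of_nonneg_right ih2 hApos.le
        _ = (a (n+1) : ℝ) ^ ((1 - ((α+1)⁻¹)^n)/α + 1) := by
            rw [← Real.rpow_add hApos]
        _ ≤ ((a (n+2) : ℝ) ^ (α+1)⁻¹) ^ ((1 - ((α+1)⁻¹)^n)/α + 1) := by
            apply Real.rpow_le_rpow hApos.le
            · exact aux_root a α ha hα hgrow (n+1) (by omega)
            · linarith
        _ = (a (n+2) : ℝ) ^ ((α+1)⁻¹ * ((1 - ((α+1)⁻¹)^n)/α + 1)) := by
            rw [Real.rpow_mul (by positivity : (0:ℝ) ≤ (a (n+2) : ℝ))]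
        _ = (a (n+1+1) : ℝ) ^ ((1 - ((α+1)⁻¹)^(n+1))/α) := by
            congr 1
            rw [div_add_one hane, ← mul_div_assoc, pow_succ]
            congr 1
            linear_combination inv_mul_cancel₀ hne
end aux

section auxnat
variable (a : ℕ → ℕ) (hc : ∀ n, 1 ≤ n → a n ^ 3 + 1 ≤ a (n + 1)) (ha1 : 0 < a 1)

include hc ha1 in
lemma aux_two (n : ℕ) (hn : 2 ≤ n) : 2 ≤ a n := by
  induction n with
  | zero => omega
  | succ k ih =>
    rcases Nat.lt_or_ge k 2 with h | h
    · have hk : k = 1 := by omega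
      subst hk
      have h1 := hc 1 le_rfl
      have h2 : 0 < a 1 ^ 3 := pow_pos ha1 3
      omega
    · have h1 := hc k (by omega)
      have h2 := ih (by omega)
      have h3 : 2 ^ 3 ≤ a k ^ 3 := Nat.pow_le_pow_left h2 3
      omega

include hc ha1 in
lemma aux_dpow (m : ℕ) (hm : 1 ≤ m) : 2 ^ (3 ^ (m - 1)) ≤ a (m + 1) := by
  induction m with
  | zero => omega
  | succ k ih =>
    rcases Nat.lt_or_ge k 1 with h | h
    · have hk : k = 0 := by omega
      subst hk
      simpa using aux_two a hc ha1 2 le_rfl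
    · have ih2 := ih h
      have hstep := hc (k + 1) (by omega)
      have : (2 ^ 3 ^ (k - 1)) ^ 3 ≤ a (k+1) ^ 3 := Nat.pow_le_pow_left ih2 3
      have he : (2 ^ 3 ^ (k - 1)) ^ 3 = 2 ^ (3 ^ (k + 1 - 1)) := by
        rw [← pow_mul]
        congr 1
        have : k + 1 - 1 = (k - 1) + 1 := by omega
        rw [this, pow_succ]
      omega

include hc ha1 in
lemma aux_double (k : ℕ) (hk : 2 ≤ k) : 2 * a k ≤ a (k + 1) := by
  have h2 := aux_two a hc ha1 k hk
  have h1 := hc k (by omega)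
  have he : a k ^ 3 = a k * a k * a k := by ring
  have h4 : 2 * 2 * a k ≤ a k * a k * a k := Nat.mul_le_mul (Nat.mul_le_mul h2 h2) le_rfl
  omega

include hc ha1 in
lemma aux_geom (m : ℕ) (hm : 1 ≤ m) (i : ℕ) : 2 ^ i * a (m + 1) ≤ a (m + 1 + i) := by
  induction i with
  | zero => simp
  | succ j ih =>
    have h1 := aux_double a hc ha1 (m + 1 + j) (by omega)
    calc 2 ^ (j+1) * a (m+1) = 2 * (2 ^ j * a (m+1)) := by ring
      _ ≤ 2 * a (m + 1 + j) := by omega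
      _ ≤ a (m + 1 + j + 1) := h1
      _ = a (m + 1 + (j+1)) := by ring_nf

end auxnat

lemma aux_den (a : ℕ → ℕ) (ha : ∀ n, 1 ≤ n → 0 < a n) (m : ℕ) :
    (∑ k ∈ Finset.Icc 1 m, (1 : ℚ) / (a k : ℚ)).den ∣ ∏ k ∈ Finset.Icc 1 m, a k := by
  induction m with
  | zero => simp
  | succ n ih =>
    rw [Finset.sum_Icc_succ_top (by omega), Finset.prod_Icc_succ_top (by omega)]
    have h1 := Rat.add_den_dvd (∑ k ∈ Finset.Icc 1 n, (1 : ℚ) / (a k : ℚ)) ((1:ℚ) / (a (n+1) : ℚ))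
    have h2 : ((1:ℚ) / (a (n+1) : ℚ)).den = a (n+1) := by
      rw [one_div]
      exact Rat.inv_natCast_den_of_pos (ha (n+1) (by omega))
    rw [h2] at h1
    exact h1.trans (Nat.mul_dvd_mul_right ih _)

/-- With `(a_n)`, `α` as before, `θ = ∑_{n=1}^∞ 1/a_n` and `p_m/q_m` the `m`-th partial
sum in lowest terms, one has `|θ - p_m/q_m| < 1/q_m^α` for all sufficiently large `m`. -/
theorem stmt_5 (a : ℕ → ℕ) (ha : ∀ n, 1 ≤ n → 0 < a n) (α : ℝ) (hα : 2 < α)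
    (hgrow : ∀ n, 1 ≤ n → (a n : ℝ) ^ (α + 1) < (a (n + 1) : ℝ))
    (θ : ℝ) (hθ : HasSum (fun n : ℕ => (1 : ℝ) / (a (n + 1) : ℝ)) θ) :
    ∃ M : ℕ, ∀ m, M ≤ m →
      |θ - ((∑ k ∈ Finset.Icc 1 m, (1 : ℚ) / (a k : ℚ) : ℚ) : ℝ)| <
        1 / (((∑ k ∈ Finset.Icc 1 m, (1 : ℚ) / (a k : ℚ)).den : ℝ)) ^ α := by
  have hc := aux_cube a α ha hα hgrow
  have ha1 := ha 1 le_rfl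
  set f : ℕ → ℝ := fun n => (1:ℝ) / (a (n+1) : ℝ) with hfdef
  have hf : Summable f := hθ.summable
  have hfm : ∀ m : ℕ, Summable (fun i => f (i + m)) := fun m =>
    (summable_nat_add_iff m).mpr hf
  -- (1) the tail identity
  have hsum_eq : ∀ m : ℕ, θ - ((∑ k ∈ Finset.Icc 1 m, (1 : ℚ) / (a k : ℚ) : ℚ) : ℝ)
      = ∑' i, f (i + m) := by
    intro m
    have h1 := Summable.sum_add_tsum_nat_add (f := f) m hf
    rw [hθ.tsum_eq] at h1
    have h2 : ((∑ k ∈ Finset.Icc 1 m, (1 : ℚ) / (a k : ℚ) : ℚ) : ℝ)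
        = ∑ i ∈ Finset.range m, f i := by
      push_cast
      rw [← Finset.Ico_add_one_right_eq_Icc, Finset.sum_Ico_eq_sum_range]
      norm_num
      exact Finset.sum_congr rfl fun i _ => by rw [hfdef]; simp [Nat.add_comm]
    rw [h2]
    linarith
  -- (2) tails are nonnegative
  have htail0 : ∀ m : ℕ, 0 ≤ ∑' i, f (i + m) := fun m =>
    tsum_nonneg fun i => by rw [hfdef]; positivity
  -- (3) geometric tail bound
  have htail2 : ∀ m : ℕ, 1 ≤ m → (∑' i, f (i + m)) ≤ 2 / (a (m+1) : ℝ) := by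
    intro m hm
    have hApos : (0:ℝ) < (a (m+1) : ℝ) := by
      exact_mod_cast ha (m+1) (by omega)
    have hbound : ∀ i : ℕ, f (i + m) ≤ (1/2:ℝ)^i * (1 / (a (m+1) : ℝ)) := by
      intro i
      have hg := aux_geom a hc ha1 m hm i
      have hg' : (2:ℝ)^i * (a (m+1) : ℝ) ≤ (a (i + m + 1) : ℝ) := by
        have : m + 1 + i = i + m + 1 := by omega
        rw [this] at hg
        exact_mod_cast hg
      have hpos : (0:ℝ) < (2:ℝ)^i * (a (m+1) : ℝ) := by positivity
      have := one_div_le_one_div_of_le hpos hg'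
      calc f (i + m) = 1 / (a (i + m + 1) : ℝ) := rfl
        _ ≤ 1 / ((2:ℝ)^i * (a (m+1) : ℝ)) := this
        _ = (1/2:ℝ)^i * (1 / (a (m+1) : ℝ)) := by
            rw [div_pow, one_pow, one_div_mul_one_div]
    have hgsum : Summable (fun i : ℕ => (1/2:ℝ)^i * (1 / (a (m+1) : ℝ))) :=
      (summable_geometric_of_lt_one (by norm_num) (by norm_num)).mul_right _
    calc (∑' i, f (i + m)) ≤ ∑' i, (1/2:ℝ)^i * (1 / (a (m+1) : ℝ)) :=
          Summable.tsum_le_tsum hbound (hfm m) hgsum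
      _ = (1 - 1/2)⁻¹ * (1 / (a (m+1) : ℝ)) := by
          rw [tsum_mul_right, tsum_geometric_of_lt_one (by norm_num) (by norm_num)]
      _ = 2 / (a (m+1) : ℝ) := by norm_num [div_eq_mul_inv]
  -- (4) peel off the first term of the tail
  have hsplit : ∀ m : ℕ, (∑' i, f (i + m)) = f m + ∑' i, f (i + (m+1)) := by
    intro m
    rw [Summable.tsum_eq_zero_add (hfm m)]
    congr 1
    · simp
    · exact tsum_congr fun i => by rw [show i + 1 + m = i + (m+1) from by omega]
  -- choose B with α + 1 ≤ 2^B
  obtain ⟨B, hB⟩ : ∃ B : ℕ, α + 1 ≤ (2:ℝ)^B := by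
    obtain ⟨B, hB⟩ := pow_unbounded_of_one_lt (α + 1) (by norm_num : (1:ℝ) < 2)
    exact ⟨B, hB.le⟩
  refine ⟨max 7 (B + 2), fun m hm => ?_⟩
  have hm7 : 7 ≤ m := le_trans (le_max_left _ _) hm
  have hmB : B + 2 ≤ m := le_trans (le_max_right _ _) hm
  have hm1 : 1 ≤ m := by omega
  set A : ℝ := (a (m+1) : ℝ) with hAdef
  have hApos : (0:ℝ) < A := by rw [hAdef]; exact_mod_cast ha (m+1) (by omega)
  have hA2 : (2:ℝ) ≤ A := by rw [hAdef]; exact_mod_cast aux_two a hc ha1 (m+1) (by omega)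
  have hAbig : (2:ℝ)^(3^(m-1)) ≤ A := by
    have h := aux_dpow a hc ha1 m hm1
    rw [hAdef]
    exact_mod_cast h
  set q : ℕ := (∑ k ∈ Finset.Icc 1 m, (1 : ℚ) / (a k : ℚ)).den with hqdef
  have hq1 : 0 < q := (∑ k ∈ Finset.Icc 1 m, (1 : ℚ) / (a k : ℚ)).pos
  have hprodpos : 0 < ∏ k ∈ Finset.Icc 1 m, a k :=
    Finset.prod_pos fun k hk => ha k (Finset.mem_Icc.mp hk).1
  have hqD : (q:ℝ) ≤ ∏ k ∈ Finset.Icc 1 m, (a k : ℝ) := by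
    have h1 : q ≤ ∏ k ∈ Finset.Icc 1 m, a k :=
      Nat.le_of_dvd hprodpos (aux_den a ha m)
    calc (q:ℝ) ≤ ((∏ k ∈ Finset.Icc 1 m, a k : ℕ) : ℝ) := by exact_mod_cast h1
      _ = ∏ k ∈ Finset.Icc 1 m, (a k : ℝ) := by push_cast; rfl
  set ε : ℝ := ((α+1)⁻¹)^m with hεdef
  have hεpos : 0 < ε := by
    have : (0:ℝ) < α + 1 := by linarith
    positivity
  have hQα : (q:ℝ)^α ≤ A ^ (1 - ε) := by
    have hq0 : (0:ℝ) ≤ (q:ℝ) := by positivity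
    have h1 : (q:ℝ)^α ≤ (∏ k ∈ Finset.Icc 1 m, (a k : ℝ))^α :=
      Real.rpow_le_rpow hq0 hqD (by linarith)
    have h2 : (∏ k ∈ Finset.Icc 1 m, (a k : ℝ))^α ≤ (A ^ ((1 - ε)/α))^α := by
      apply Real.rpow_le_rpow (Finset.prod_nonneg fun k _ => by positivity)
        (aux_prod a α ha hα hgrow m hm1) (by linarith)
    have h3 : (A ^ ((1 - ε)/α))^α = A ^ (1 - ε) := by
      rw [← Real.rpow_mul hApos.le]
      congr 1
      field_simp
    linarith
  -- the key analytic inequality: 1 + 2/A^2 < A^ε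
  have hlog2 : (1/2:ℝ) < Real.log 2 := by
    have := Real.log_two_gt_d9
    linarith
  have hlogA : (3^(m-1) : ℝ) * Real.log 2 ≤ Real.log A := by
    have h1 : Real.log ((2:ℝ)^(3^(m-1))) ≤ Real.log A :=
      Real.log_le_log (by positivity) hAbig
    rw [Real.log_pow] at h1
    push_cast at h1
    exact h1
  have hεlow : (1:ℝ) / 2^(B*m) ≤ ε := by
    have h1 : (α+1)^m ≤ ((2:ℝ)^B)^m :=
      pow_le_pow_left₀ (by linarith) hB m
    rw [← pow_mul] at h1
    have h2 : (0:ℝ) < (α+1)^m := by positivity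
    rw [hεdef, inv_pow, one_div]
    exact inv_anti₀ h2 h1
  have hA2big : (2:ℝ)^(2*3^(m-1)) ≤ A^2 := by
    calc (2:ℝ)^(2*3^(m-1)) = ((2:ℝ)^(3^(m-1)))^2 := by rw [← pow_mul, Nat.mul_comm]
      _ ≤ A^2 := by
          apply pow_le_pow_left₀ (by positivity) hAbig
  have hnat : B * m + 2 ≤ 2 * 3^(m-1) := aux_nat_ineq B m hm7 hmB
  have hkey : 1 + 2/A^2 < A ^ ε := by
    have hexp : 1 + ε * Real.log A ≤ A ^ ε := by
      rw [Real.rpow_def_of_pos hApos, mul_comm (Real.log A) ε]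
      linarith [Real.add_one_le_exp (ε * Real.log A)]
    have h3m : (1:ℝ) ≤ (3^(m-1) : ℝ) := by
      exact_mod_cast Nat.one_le_iff_ne_zero.mpr (pow_ne_zero _ (by norm_num))
    have hstep1 : (1:ℝ)/2^(B*m+1) < ε * Real.log A := by
      have hlogpos : (0:ℝ) < Real.log 2 := by linarith
      have hA1 : (1/2 : ℝ) < (3^(m-1) : ℝ) * Real.log 2 := by
        nlinarith
      have : (1/2 : ℝ) < Real.log A := lt_of_lt_of_le hA1 hlogA
      have hεA : ε * (1/2) < ε * Real.log A := by
        apply mul_lt_mul_of_pos_left this hεpos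
      have hh : (1:ℝ)/2^(B*m+1) ≤ ε * (1/2) := by
        have hmul := mul_le_mul_of_nonneg_right hεlow (by norm_num : (0:ℝ) ≤ 1/2)
        calc (1:ℝ)/2^(B*m+1) = (1/2^(B*m)) * (1/2) := by rw [pow_succ]; ring
          _ ≤ ε * (1/2) := hmul
      linarith
    have hstep2 : 2/A^2 ≤ (1:ℝ)/2^(B*m+1) := by
      have h1 : (2:ℝ)^(B*m+2) ≤ (2:ℝ)^(2*3^(m-1)) :=
        pow_le_pow_right₀ (by norm_num) hnat
      have h2 : (2:ℝ)^(B*m+2) ≤ A^2 := le_trans h1 hA2big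
      rw [div_le_div_iff₀ (by positivity) (by positivity)]
      calc (2:ℝ) * 2^(B*m+1) = 2^(B*m+2) := by ring
        _ ≤ A^2 := h2
        _ = 1 * A^2 := by ring
    linarith
  -- final assembly
  rw [hsum_eq m, abs_of_nonneg (htail0 m)]
  have hcube : A^3 ≤ (a (m+2) : ℝ) := by
    have := aux_cube a α ha hα hgrow (m+1) (by omega)
    have h2 : ((a (m+1) ^ 3 : ℕ) : ℝ) ≤ (a (m+1+1) : ℝ) := by exact_mod_cast Nat.le_of_succ_le this
    push_cast at h2
    exact h2
  have hT : (∑' i, f (i + m)) ≤ 1/A + 2/A^3 := by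
    rw [hsplit m]
    have h1 : f m = 1/A := rfl
    have h2 : (∑' i, f (i + (m+1))) ≤ 2 / (a (m+2) : ℝ) := htail2 (m+1) (by omega)
    have h3 : 2 / (a (m+2) : ℝ) ≤ 2 / A^3 := by
      apply div_le_div_of_nonneg_left (by norm_num) (by positivity) hcube
    linarith
  have hfinal : 1/A + 2/A^3 < 1 / (q:ℝ)^α := by
    have hqαpos : (0:ℝ) < (q:ℝ)^α := Real.rpow_pos_of_pos (by exact_mod_cast hq1) α
    have h1 : 1/A + 2/A^3 = (1 + 2/A^2)/A := by
      field_simp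
    have h2 : (1 + 2/A^2)/A < A^ε / A :=
      div_lt_div_of_pos_right hkey hApos
    have h3 : A^ε / A = 1 / A^(1-ε) := by
      rw [Real.rpow_sub hApos, Real.rpow_one, one_div_div]
    have h4 : 1 / A^(1-ε) ≤ 1 / (q:ℝ)^α :=
      one_div_le_one_div_of_le hqαpos hQα
    rw [h1]
    calc (1 + 2/A^2)/A < A^ε / A := h2
      _ = 1 / A^(1-ε) := h3
      _ ≤ 1 / (q:ℝ)^α := h4
  linarith [hT, hfinal]
end

section
/- Let (a_n)_{n≥1} be a sequence of positive integers and let α > 1 be a real number such that a_n^{α+1} ≤ a_{n+1} for all n ≥ 1. For m ≥ 1 write ∑_{k=1}^m 1/a_k = p_m/q_m in lowest terms. Then q_n ≤ a_n^{(α+1)/α} for all n ≥ 1. -/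
/-- Let `(a_n)_{n≥1}` be a sequence of positive integers and `α > 1` a real number with
`a_n^{α+1} ≤ a_{n+1}` for all `n ≥ 1`.  If `q_n` is the denominator of the `n`-th
partial sum `∑_{k=1}^n 1/a_k` in lowest terms, then `q_n ≤ a_n^{(α+1)/α}`. -/
theorem stmt_8 (a : ℕ → ℕ) (ha : ∀ n, 1 ≤ n → 0 < a n) (α : ℝ) (hα : 1 < α)
    (hgrow : ∀ n, 1 ≤ n → (a n : ℝ) ^ (α + 1) ≤ (a (n + 1) : ℝ)) :
    ∀ n, 1 ≤ n →
      (((∑ k ∈ Finset.Icc 1 n, (1 : ℚ) / (a k : ℚ)).den : ℝ)) ≤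
        (a n : ℝ) ^ ((α + 1) / α) := by
  have hαpos : (0:ℝ) < α := by linarith
  intro n hn
  induction n, hn using Nat.le_induction with
  | base =>
    simp only [Finset.Icc_self, Finset.sum_singleton, one_div]
    rw [Rat.inv_natCast_den_of_pos (ha 1 le_rfl)]
    have h1 : (1:ℝ) ≤ (a 1 : ℝ) := by exact_mod_cast ha 1 le_rfl
    calc ((a 1 : ℝ)) = (a 1 : ℝ) ^ (1:ℝ) := (Real.rpow_one _).symm
      _ ≤ (a 1 : ℝ) ^ ((α + 1) / α) := by
          apply Real.rpow_le_rpow_of_exponent_le h1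
          rw [le_div_iff₀ hαpos]; linarith
  | succ n hn ih =>
    have han1 : (1:ℝ) ≤ (a (n+1) : ℝ) := by exact_mod_cast ha (n+1) (by omega)
    have han : (1:ℝ) ≤ (a n : ℝ) := by exact_mod_cast ha n hn
    -- denominator bound
    have hsplit : ∑ k ∈ Finset.Icc 1 (n+1), (1 : ℚ) / (a k : ℚ)
        = (∑ k ∈ Finset.Icc 1 n, (1 : ℚ) / (a k : ℚ)) + 1 / (a (n+1) : ℚ) := by
      rw [Finset.sum_Icc_succ_top (by omega : 1 ≤ n + 1)]
    set S := ∑ k ∈ Finset.Icc 1 n, (1 : ℚ) / (a k : ℚ) with hS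
    have hdvd : (S + 1 / (a (n+1) : ℚ)).den ∣ S.den * a (n+1) := by
      have h := Rat.add_den_dvd S (1 / (a (n+1) : ℚ))
      rw [one_div, Rat.inv_natCast_den_of_pos (ha (n+1) (by omega))] at h
      rwa [one_div]
    have hle : ((S + 1 / (a (n+1) : ℚ)).den : ℝ) ≤ (S.den : ℝ) * (a (n+1) : ℝ) := by
      have := Nat.le_of_dvd (Nat.mul_pos S.den_pos (ha (n+1) (by omega))) hdvd
      exact_mod_cast this
    rw [hsplit]
    have key : (a n : ℝ) ^ ((α + 1) / α) * (a (n+1) : ℝ) ≤ (a (n+1) : ℝ) ^ ((α + 1) / α) := by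
      have h1 : (a n : ℝ) ^ ((α + 1) / α) ≤ (a (n+1) : ℝ) ^ (1/α) := by
        have : ((a n : ℝ) ^ (α+1)) ^ (1/α) ≤ (a (n+1) : ℝ) ^ (1/α) :=
          Real.rpow_le_rpow (by positivity) (hgrow n hn) (by positivity)
        rwa [← Real.rpow_mul (by positivity), mul_one_div] at this
      calc (a n : ℝ) ^ ((α + 1) / α) * (a (n+1) : ℝ)
          ≤ (a (n+1) : ℝ) ^ (1/α) * (a (n+1) : ℝ) := by
            apply mul_le_mul_of_nonneg_right h1 (by positivity)
        _ = (a (n+1) : ℝ) ^ ((α + 1) / α) := by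
            have hx : (0:ℝ) < (a (n+1):ℝ) := by positivity
            rw [show (α+1)/α = 1/α + 1 by field_simp; ring, Real.rpow_add hx, Real.rpow_one]
    calc ((S + 1 / (a (n+1) : ℚ)).den : ℝ) ≤ (S.den : ℝ) * (a (n+1) : ℝ) := hle
      _ ≤ (a n : ℝ) ^ ((α + 1) / α) * (a (n+1) : ℝ) := by
          apply mul_le_mul_of_nonneg_right ih (by positivity)
      _ ≤ (a (n+1) : ℝ) ^ ((α + 1) / α) := key
end

section
/- Let (a_n)_{n≥1} be the sequence of positive integers defined by a_1 = 2 and a_{n+1} = a_n^4 for n ≥ 1, and let θ = ∑_{n=1}^∞ 1/a_n. Then for every nonzero polynomial P with integer coefficients of degree 2 and height H, one has |P(θ)| > 1/(6H)^{10}. -/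
open Finset
set_option maxHeartbeats 1000000

private def qq (m : ℕ) : ℕ := 2 ^ (4 ^ m)
private def pp (m : ℕ) : ℕ := ∑ i ∈ Finset.range (m + 1), 2 ^ (4 ^ m - 4 ^ i)

private lemma qq_pos (m : ℕ) : 0 < qq m := Nat.pow_pos (by norm_num)

private lemma qq_succ (m : ℕ) : qq (m + 1) = qq m ^ 4 := by
  rw [qq, qq, ← pow_mul, pow_succ]

private lemma pp_odd (m : ℕ) : Odd (pp m) := by
  rw [pp, Finset.sum_range_succ, Nat.sub_self, pow_zero]
  refine Even.add_one ?_
  refine Finset.even_sum _ fun i hi => ?_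
  rw [Finset.mem_range] at hi
  have h4 : 4 ^ i < 4 ^ m := Nat.pow_lt_pow_right (by norm_num) hi
  exact (Nat.even_pow' (by omega)).mpr even_two

private lemma pp_div (m : ℕ) :
    (pp m : ℝ) / (qq m : ℝ) = ∑ i ∈ Finset.range (m + 1), 1 / (qq i : ℝ) := by
  rw [pp]
  push_cast
  rw [Finset.sum_div]
  refine Finset.sum_congr rfl fun i hi => ?_
  rw [Finset.mem_range] at hi
  have h4 : 4 ^ i ≤ 4 ^ m := Nat.pow_le_pow_right (by norm_num) (by omega)
  rw [qq, qq]
  rw [div_eq_div_iff (by positivity) (by positivity), one_mul]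
  push_cast
  rw [← pow_add]
  congr 1
  omega

private lemma qq_grow (m n : ℕ) : qq (m + 1) * 2 ^ n ≤ qq (n + (m + 1)) := by
  rw [qq, qq, ← pow_add]
  apply Nat.pow_le_pow_right (by norm_num)
  have h1 : n < 4 ^ n := Nat.lt_pow_self (by norm_num)
  calc 4 ^ (m+1) + n ≤ 4 ^ (m+1) + 4 ^ (m+1) * n := by
        have h2 : 1 ≤ 4^(m+1) := Nat.one_le_pow _ _ (by norm_num); nlinarith
    _ = 4 ^ (m+1) * (n+1) := by ring
    _ ≤ 4 ^ (m+1) * 4 ^ n := Nat.mul_le_mul_left _ (by omega)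
    _ = 4 ^ (n + (m+1)) := by rw [← pow_add]; ring_nf

private lemma tail_bound (θ : ℝ) (hf : HasSum (fun n : ℕ => (1:ℝ)/(qq n : ℝ)) θ) (m : ℕ) :
    0 ≤ θ - ∑ i ∈ Finset.range (m+1), (1:ℝ)/(qq i : ℝ) ∧
    θ - ∑ i ∈ Finset.range (m+1), (1:ℝ)/(qq i : ℝ) ≤ 2 / (qq (m+1) : ℝ) := by
  have hs := hf.summable
  have key := hs.sum_add_tsum_nat_add (m+1)
  rw [hf.tsum_eq] at key
  have htail : θ - ∑ i ∈ Finset.range (m+1), (1:ℝ)/(qq i : ℝ)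
      = ∑' n : ℕ, (1:ℝ)/(qq (n + (m+1)) : ℝ) := by linarith
  have hsl : Summable (fun n : ℕ => (1:ℝ)/(qq (n + (m+1)) : ℝ)) :=
    (summable_nat_add_iff (m+1)).mpr hs
  constructor
  · rw [htail]
    exact tsum_nonneg fun n => by positivity
  · rw [htail]
    have hg : Summable (fun n : ℕ => (1/(qq (m+1) : ℝ)) * (1/2)^n) :=
      (summable_geometric_of_lt_one (by norm_num) (by norm_num)).mul_left _
    have hle : ∀ n : ℕ, (1:ℝ)/(qq (n + (m+1)) : ℝ) ≤ (1/(qq (m+1) : ℝ)) * (1/2)^n := by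
      intro n
      have heq : (1/(qq (m+1) : ℝ)) * (1/2)^n = 1 / ((qq (m+1):ℝ) * 2^n) := by
        rw [div_pow, one_pow, div_mul_div_comm, one_mul]
      rw [heq]
      have hqp : (0:ℕ) < qq (m+1) := Nat.pow_pos (by norm_num)
      apply one_div_le_one_div_of_le
        (mul_pos (show (0:ℝ) < qq (m+1) by exact_mod_cast hqp) (by positivity))
      exact_mod_cast qq_grow m n
    calc ∑' n : ℕ, (1:ℝ)/(qq (n + (m+1)) : ℝ) ≤ ∑' n : ℕ, (1/(qq (m+1) : ℝ)) * (1/2)^n :=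
          Summable.tsum_le_tsum hle hsl hg
      _ = (1/(qq (m+1) : ℝ)) * 2 := by
          rw [tsum_mul_left, tsum_geometric_of_lt_one (by norm_num) (by norm_num)]
          norm_num
      _ = 2 / (qq (m+1) : ℝ) := by ring

private lemma odd_coprime_two (p : ℤ) (h : Odd p) : IsCoprime p 2 := by
  have h2 : ¬ (2 : ℤ) ∣ p := by rw [Int.two_dvd_ne_zero, Int.odd_iff.mp h]
  exact ((Int.prime_two.coprime_iff_not_dvd).mpr h2).symm

/-- The height of an integer polynomial: the maximum of the absolute values of its
coefficients. -/
def polyHeight (P : Polynomial ℤ) : ℕ := P.support.sup fun i => (P.coeff i).natAbs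

/-- Let `(a_n)_{n≥1}` be given by `a_1 = 2`, `a_{n+1} = a_n ^ 4` and
`θ = ∑_{n=1}^∞ 1/a_n`.  Then for every nonzero `P ∈ ℤ[X]` of degree `2` and
height `H` one has `|P(θ)| > 1/(6H)^{10}`. -/
theorem stmt_12 (a : ℕ → ℕ) (h1 : a 1 = 2) (hrec : ∀ n, 1 ≤ n → a (n + 1) = a n ^ 4)
    (θ : ℝ) (hθ : HasSum (fun n : ℕ => (1 : ℝ) / (a (n + 1) : ℝ)) θ) :
    ∀ P : Polynomial ℤ, P ≠ 0 → P.natDegree = 2 →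
      1 / (6 * (polyHeight P : ℝ)) ^ 10 < |(Polynomial.aeval θ) P| := by
  have ha : ∀ n, a (n + 1) = qq n := by
    intro n
    induction n with
    | zero => simpa [qq] using h1
    | succ n ih => rw [hrec (n+1) (by omega), ih, qq_succ]
  have hf : HasSum (fun n : ℕ => (1:ℝ)/(qq n : ℝ)) θ := by
    have : (fun n : ℕ => (1 : ℝ) / (a (n + 1) : ℝ)) = fun n : ℕ => (1:ℝ)/(qq n : ℝ) := by
      funext n; rw [ha n]
    rwa [this] at hθ
  intro P hP hdeg
  set H : ℕ := polyHeight P with hHdef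
  have hc2 : P.coeff 2 ≠ 0 := by
    have h := Polynomial.leadingCoeff_ne_zero.mpr hP
    rwa [Polynomial.leadingCoeff, hdeg] at h
  have hcoeff : ∀ i, (P.coeff i).natAbs ≤ H := by
    intro i
    by_cases h : P.coeff i = 0
    · simp [h]
    · exact Finset.le_sup (f := fun i => (P.coeff i).natAbs) (Polynomial.mem_support_iff.mpr h)
  have hH1 : 1 ≤ H := le_trans (Int.natAbs_pos.mpr hc2) (hcoeff 2)
  have habs : ∀ i, |(P.coeff i : ℝ)| ≤ (H:ℝ) := by
    intro i
    have h := hcoeff i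
    rw [← Int.cast_abs, Int.abs_eq_natAbs]
    exact_mod_cast h
  have heval : (Polynomial.aeval θ) P
      = (P.coeff 2 : ℝ) * θ^2 + (P.coeff 1 : ℝ) * θ + (P.coeff 0 : ℝ) := by
    rw [Polynomial.aeval_eq_sum_range, hdeg]
    simp [Finset.sum_range_succ, zsmul_eq_mul]
    ring
  -- θ ≤ 1
  have hθ1 : θ ≤ 1 := by
    have htb := tail_bound θ hf 0
    have h0 : (∑ i ∈ Finset.range 1, (1:ℝ)/(qq i : ℝ)) = 1/2 := by
      norm_num [qq]
    have h1' : (qq 1 : ℝ) = 16 := by norm_num [qq]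
    rw [h0, h1'] at htb
    linarith [htb.2]
  -- main estimate
  have hmain : ∀ m : ℕ, 12 * H ≤ qq m ^ 2 →
      P.coeff 2 * (pp m : ℤ)^2 + P.coeff 1 * (pp m) * (qq m) + P.coeff 0 * (qq m)^2 ≠ 0 →
      1 / (2 * (qq m : ℝ)^2) ≤ |(Polynomial.aeval θ) P| := by
    intro m hq hZ
    set Z : ℤ := P.coeff 2 * (pp m : ℤ)^2 + P.coeff 1 * (pp m) * (qq m)
        + P.coeff 0 * (qq m)^2 with hZdef
    have hZ1 : (1:ℝ) ≤ |(Z:ℝ)| := by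
      rw [← Int.cast_abs]
      exact_mod_cast Int.one_le_abs hZ
    have hQ0 : (0:ℝ) < (qq m : ℝ) := by exact_mod_cast qq_pos m
    set t : ℝ := ∑ i ∈ Finset.range (m+1), (1:ℝ)/(qq i : ℝ) with htdef
    have hpt : (pp m : ℝ) / (qq m : ℝ) = t := pp_div m
    have htb := tail_bound θ hf m
    have ht0 : 0 ≤ t := Finset.sum_nonneg fun i _ => by positivity
    have hts : t ≤ θ := by linarith [htb.1]
    have hid : (Z:ℝ) / (qq m:ℝ)^2
        = (P.coeff 2:ℝ)*t^2 + (P.coeff 1:ℝ)*t + (P.coeff 0:ℝ) := by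
      rw [← hpt, hZdef]
      field_simp
      push_cast
      ring
    have hdiff : (Polynomial.aeval θ) P - (Z:ℝ)/(qq m:ℝ)^2
        = (P.coeff 2:ℝ)*(θ^2 - t^2) + (P.coeff 1:ℝ)*(θ - t) := by
      rw [heval, hid]; ring
    have hd1 : |(P.coeff 2:ℝ)*(θ^2-t^2) + (P.coeff 1:ℝ)*(θ-t)| ≤ 3*(H:ℝ)*(θ - t) := by
      have e1 : |(P.coeff 2:ℝ)*(θ^2-t^2) + (P.coeff 1:ℝ)*(θ-t)|
          ≤ |(P.coeff 2:ℝ)| * |θ^2-t^2| + |(P.coeff 1:ℝ)| * |θ-t| := by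
        calc |(P.coeff 2:ℝ)*(θ^2-t^2) + (P.coeff 1:ℝ)*(θ-t)|
            ≤ |(P.coeff 2:ℝ)*(θ^2-t^2)| + |(P.coeff 1:ℝ)*(θ-t)| := abs_add_le _ _
          _ = |(P.coeff 2:ℝ)| * |θ^2-t^2| + |(P.coeff 1:ℝ)| * |θ-t| := by rw [abs_mul, abs_mul]
      have h2 : |θ^2 - t^2| ≤ 2*(θ-t) := by
        rw [abs_of_nonneg (by nlinarith)]
        nlinarith
      have h3 : |θ - t| = θ - t := abs_of_nonneg (by linarith)
      calc |(P.coeff 2:ℝ)*(θ^2-t^2) + (P.coeff 1:ℝ)*(θ-t)|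
          ≤ |(P.coeff 2:ℝ)| * |θ^2-t^2| + |(P.coeff 1:ℝ)| * |θ-t| := e1
        _ ≤ (H:ℝ)*(2*(θ-t)) + (H:ℝ)*(θ-t) := by
            refine add_le_add ?_ ?_
            · exact mul_le_mul (habs 2) h2 (abs_nonneg _) (by positivity)
            · rw [h3]
              exact mul_le_mul_of_nonneg_right (habs 1) (by linarith)
        _ = 3*(H:ℝ)*(θ-t) := by ring
    have hq4 : (qq (m+1):ℝ) = (qq m:ℝ)^4 := by exact_mod_cast congrArg Nat.cast (qq_succ m)
    have htail2 : θ - t ≤ 2/(qq m:ℝ)^4 := by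
      rw [← hq4]; exact htb.2
    have hqH : 12*(H:ℝ) ≤ (qq m:ℝ)^2 := by exact_mod_cast hq
    have hd2 : 3*(H:ℝ)*(θ - t) ≤ 1/(2*(qq m:ℝ)^2) := by
      have hH0 : (0:ℝ) ≤ (H:ℝ) := by positivity
      have e2 : 3*(H:ℝ)*(θ-t) ≤ 3*(H:ℝ)*(2/(qq m:ℝ)^4) :=
        mul_le_mul_of_nonneg_left htail2 (by positivity)
      have eqq : 3*(H:ℝ)*(2/(qq m:ℝ)^4) = 6*(H:ℝ)/(qq m:ℝ)^4 := by ring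
      have e3 : 6*(H:ℝ)/(qq m:ℝ)^4 ≤ 1/(2*(qq m:ℝ)^2) := by
        rw [div_le_div_iff₀ (by positivity) (by positivity)]
        nlinarith [pow_pos hQ0 2, pow_pos hQ0 4]
      linarith
    have hZQ : 1/(qq m:ℝ)^2 ≤ |(Z:ℝ)/(qq m:ℝ)^2| := by
      rw [abs_div, abs_pow, abs_of_pos hQ0]
      gcongr
    -- conclude
    rcases abs_cases ((Z:ℝ)/(qq m:ℝ)^2) with ⟨e, hsgn⟩ | ⟨e, hsgn⟩ <;>
    rcases abs_cases ((Polynomial.aeval θ) P) with ⟨e', hsgn'⟩ | ⟨e', hsgn'⟩ <;>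
    rcases abs_le.mp (hdiff ▸ hd1.trans hd2 : |(Polynomial.aeval θ) P - (Z:ℝ)/(qq m:ℝ)^2| ≤ 1/(2*(qq m:ℝ)^2)) with ⟨hl, hr⟩ <;>
    rw [e] at hZQ <;> rw [e'] <;>
    nlinarith [pow_pos hQ0 2,
      (show 2 * (1/(2*(qq m:ℝ)^2)) = 1/(qq m:ℝ)^2 by field_simp),
      (show (0:ℝ) < 1/(2*(qq m:ℝ)^2) by positivity)]
  -- divisibility: if the numerator vanishes then qq m divides the leading coefficient
  have hdvd : ∀ m : ℕ, P.coeff 2 * (pp m : ℤ)^2 + P.coeff 1 * (pp m) * (qq m)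
      + P.coeff 0 * (qq m)^2 = 0 → qq m ≤ H := by
    intro m h0
    have hodd : Odd ((pp m : ℤ)) := by exact_mod_cast pp_odd m
    have hcop : IsCoprime ((qq m : ℤ)) ((pp m : ℤ)^2) := by
      have h2 : IsCoprime ((2:ℤ)) ((pp m : ℤ)) := (odd_coprime_two _ hodd).symm
      have := (h2.pow (m := 4^m) (n := 2))
      have hq2 : ((qq m : ℤ)) = 2^(4^m) := by rw [qq]; push_cast; ring
      rwa [← hq2] at this
    have hdvd2 : ((qq m : ℤ)) ∣ P.coeff 2 * (pp m:ℤ)^2 :=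
      ⟨-(P.coeff 1 * (pp m : ℤ) + P.coeff 0 * (qq m : ℤ)), by linear_combination h0⟩
    have hd : ((qq m : ℤ)) ∣ P.coeff 2 := hcop.dvd_of_dvd_mul_right hdvd2
    have hle : ((qq m : ℤ)) ≤ |P.coeff 2| := Int.le_of_dvd (abs_pos.mpr hc2) ((dvd_abs _ _).mpr hd)
    have h6 : ((qq m : ℤ)) ≤ ((P.coeff 2).natAbs : ℤ) := by rwa [Int.abs_eq_natAbs] at hle
    have h7 : ((qq m : ℤ)) ≤ (H : ℤ) := h6.trans (by exact_mod_cast hcoeff 2)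
    exact_mod_cast h7
  -- choose the minimal level
  have hex : ∃ m : ℕ, 12 * H ≤ qq m ^ 2 := by
    refine ⟨12 * H, ?_⟩
    calc 12*H ≤ 2^(12*H) := (Nat.lt_two_pow_self).le
      _ ≤ 2^(4^(12*H)) := Nat.pow_le_pow_right (by norm_num)
          (Nat.lt_pow_self (n := 12*H) (a := 4) (by norm_num)).le
      _ = qq (12*H) := rfl
      _ ≤ qq (12*H) ^ 2 := Nat.le_self_pow (by norm_num) _
  set k := Nat.find hex with hkdef
  have hks : 12 * H ≤ qq k ^ 2 := Nat.find_spec hex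
  have hk0 : k ≠ 0 := by
    intro h
    rw [h] at hks
    have hq0 : qq 0 = 2 := by norm_num [qq]
    rw [hq0] at hks
    omega
  obtain ⟨j, hj⟩ : ∃ j, k = j + 1 := Nat.exists_eq_succ_of_ne_zero hk0
  have hjlt : qq j ^ 2 < 12 * H := by
    have := Nat.find_min hex (show j < k by omega)
    omega
  have hkub : qq k ^ 2 < (12*H)^4 := by
    rw [hj, qq_succ]
    calc (qq j ^ 4)^2 = (qq j ^ 2)^4 := by ring
      _ < (12*H)^4 := Nat.pow_lt_pow_left hjlt (by norm_num)
  -- final comparison helper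
  have hcomp : ∀ m : ℕ, 2 * qq m ^ 2 < (6*H)^10 →
      P.coeff 2 * (pp m : ℤ)^2 + P.coeff 1 * (pp m) * (qq m) + P.coeff 0 * (qq m)^2 ≠ 0 →
      12 * H ≤ qq m ^ 2 →
      1 / (6 * (H : ℝ)) ^ 10 < |(Polynomial.aeval θ) P| := by
    intro m hlt hZ hq12
    refine lt_of_lt_of_le ?_ (hmain m hq12 hZ)
    have hH1' : (1:ℝ) ≤ (H:ℝ) := by exact_mod_cast hH1
    have hQp : (0:ℝ) < (qq m : ℝ) := by exact_mod_cast qq_pos m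
    rw [div_lt_div_iff₀ (pow_pos (by linarith) 10) (by positivity), one_mul, one_mul]
    have : ((2 * qq m ^ 2 : ℕ) : ℝ) < (((6*H)^10 : ℕ) : ℝ) := by exact_mod_cast hlt
    push_cast at this
    linarith
  rw [hHdef] at *
  by_cases hZk : P.coeff 2 * (pp k : ℤ)^2 + P.coeff 1 * (pp k) * (qq k)
      + P.coeff 0 * (qq k)^2 = 0
  · -- θ's k-th approximation is a root; use level k+1
    have hqH : qq k ≤ polyHeight P := hdvd k hZk
    have hZk1 : P.coeff 2 * (pp (k+1) : ℤ)^2 + P.coeff 1 * (pp (k+1)) * (qq (k+1))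
        + P.coeff 0 * (qq (k+1))^2 ≠ 0 := by
      intro h0
      have h4 : qq (k+1) ≤ polyHeight P := hdvd (k+1) h0
      rw [qq_succ] at h4
      have h5 : qq k ^ 2 ≤ qq k ^ 4 := Nat.pow_le_pow_right (qq_pos k) (by norm_num)
      omega
    have hq12 : 12 * polyHeight P ≤ qq (k+1) ^ 2 := by
      rw [qq_succ]
      calc 12 * polyHeight P ≤ qq k ^ 2 := hks
        _ ≤ (qq k ^ 4)^2 := Nat.pow_le_pow_left (Nat.le_self_pow (by norm_num) _) 2
    refine hcomp (k+1) ?_ hZk1 hq12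
    rw [qq_succ]
    calc 2 * (qq k ^ 4)^2 = 2 * (qq k)^8 := by ring
      _ ≤ 2 * (polyHeight P)^8 := by
          have := Nat.pow_le_pow_left hqH 8
          omega
      _ < (6 * polyHeight P)^10 := by
          have h8 : (polyHeight P)^8 ≤ (polyHeight P)^10 := Nat.pow_le_pow_right (by omega) (by norm_num)
          calc 2 * (polyHeight P)^8 ≤ 2 * (polyHeight P)^10 := by omega
            _ < 6^10 * (polyHeight P)^10 := by
                have : 1 ≤ (polyHeight P)^10 := Nat.one_le_pow _ _ (by omega)
                nlinarith
            _ = (6 * polyHeight P)^10 := by rw [mul_pow]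
  · refine hcomp k ?_ hZk hks
    calc 2 * qq k ^ 2 < 2 * (12 * polyHeight P)^4 := by omega
      _ ≤ (6 * polyHeight P)^10 := by
          have h4 : (polyHeight P)^4 ≤ (polyHeight P)^10 := Nat.pow_le_pow_right (by omega) (by norm_num)
          calc 2 * (12 * polyHeight P)^4 = 41472 * (polyHeight P)^4 := by ring
            _ ≤ 41472 * (polyHeight P)^10 := by omega
            _ ≤ 60466176 * (polyHeight P)^10 := by omega
            _ = (6 * polyHeight P)^10 := by rw [mul_pow]; norm_num
end
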